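/- If f(n) \ll n^\alpha for some 0 \le \alpha < 1, then \sum_{n \le x} f(\lfloor x/n \rfloor) = C_f x + O(x^{(1+\alpha)/2}), where C_f = \sum_{n=1}^\infty f(n)/(n(n+1)). -/

import Mathlib

open Finset Real

private lemma stepA' {α : ℝ} (hα0 : 0 ≤ α) (hα1 : α < 1) {c : ℝ} (hc : 0 ≤ c) :
    (1 - α) * (c + 1) ^ (-α) ≤ (c + 1) ^ (1 - α) - c ^ (1 - α) := by
  obtain ⟨ξ, hξ, hslope⟩ := exists_hasDerivAt_eq_slope (fun t => t ^ (1 - α))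
    (fun t => (1 - α) * t ^ (-α)) (by linarith : c < c + 1)
    (fun t _ => (Real.continuousAt_rpow_const t (1 - α)
      (Or.inr (by linarith))).continuousWithinAt)
    (fun t ht => by
      have ht0 : t ≠ 0 := by have := ht.1; intro h; rw [h] at this; linarith
      have := Real.hasDerivAt_rpow_const (p := 1 - α) (Or.inl ht0)
      convert this using 1
      rw [show (1:ℝ) - α - 1 = -α by ring])
  have hξ0 : 0 < ξ := lt_of_le_of_lt hc hξ.1
  have hmono : (c + 1) ^ (-α) ≤ ξ ^ (-α) :=
    Real.rpow_le_rpow_of_nonpos hξ0 hξ.2.le (by linarith)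
  have h1 : (1 - α) * ξ ^ (-α) = (c + 1) ^ (1 - α) - c ^ (1 - α) := by
    rw [hslope]; ring
  nlinarith [hmono, (by linarith : (0:ℝ) ≤ 1 - α)]

private lemma stepB' {α : ℝ} (hα1 : α < 1) {c : ℝ} (hc : 1 ≤ c) :
    (1 - α) * (c + 1) ^ (α - 2) ≤ c ^ (α - 1) - (c + 1) ^ (α - 1) := by
  obtain ⟨ξ, hξ, hslope⟩ := exists_hasDerivAt_eq_slope (fun t => t ^ (α - 1))
    (fun t => (α - 1) * t ^ (α - 2)) (by linarith : c < c + 1)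
    (fun t ht => (Real.continuousAt_rpow_const t (α - 1)
      (Or.inl (by rintro rfl; simp [Set.mem_Icc] at ht; linarith [ht.1]))).continuousWithinAt)
    (fun t ht => by
      have ht0 : t ≠ 0 := by have := ht.1; intro h; rw [h] at this; linarith
      have := Real.hasDerivAt_rpow_const (p := α - 1) (Or.inl ht0)
      convert this using 1
      rw [show α - 1 - 1 = α - 2 by ring])
  have hξ0 : 0 < ξ := by linarith [hξ.1]
  have hmono : (c + 1) ^ (α - 2) ≤ ξ ^ (α - 2) :=
    Real.rpow_le_rpow_of_nonpos hξ0 hξ.2.le (by linarith)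
  have h1 : (α - 1) * ξ ^ (α - 2) = (c + 1) ^ (α - 1) - c ^ (α - 1) := by
    rw [hslope]; ring
  nlinarith [hmono, (by linarith : α - 1 ≤ 0)]

private lemma sumA' {α : ℝ} (hα0 : 0 ≤ α) (hα1 : α < 1) (T : ℕ) :
    ∑ i ∈ Finset.range T, ((i : ℝ) + 1) ^ (-α) ≤ (T : ℝ) ^ (1 - α) / (1 - α) := by
  have h1α : (0:ℝ) < 1 - α := by linarith
  rw [le_div_iff₀ h1α]
  calc (∑ i ∈ Finset.range T, ((i : ℝ) + 1) ^ (-α)) * (1 - α)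
      = ∑ i ∈ Finset.range T, (1 - α) * ((i : ℝ) + 1) ^ (-α) := by
        rw [Finset.sum_mul]; exact Finset.sum_congr rfl fun i _ => by ring
    _ ≤ ∑ i ∈ Finset.range T, (((i+1 : ℕ) : ℝ) ^ (1-α) - ((i : ℕ) : ℝ) ^ (1-α)) := by
        refine Finset.sum_le_sum fun i _ => ?_
        push_cast
        exact stepA' hα0 hα1 (Nat.cast_nonneg i)
    _ = (T : ℝ) ^ (1-α) - ((0:ℕ) : ℝ) ^ (1-α) :=
        Finset.sum_range_sub (fun i => ((i : ℕ) : ℝ) ^ (1-α)) T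
    _ ≤ (T : ℝ) ^ (1-α) := by
        simp [Real.zero_rpow (by linarith : (1:ℝ) - α ≠ 0)]

private lemma sumB' {α : ℝ} (hα0 : 0 ≤ α) (hα1 : α < 1) {M : ℕ} (hM : 1 ≤ M) (k : ℕ) :
    ∑ i ∈ Finset.range k, ((i : ℝ) + (M : ℝ) + 1) ^ (α - 2) ≤ (M : ℝ) ^ (α - 1) / (1 - α) := by
  have h1α : (0:ℝ) < 1 - α := by linarith
  rw [le_div_iff₀ h1α, ← mul_comm (1-α)]
  calc (1 - α) * ∑ i ∈ Finset.range k, ((i : ℝ) + (M : ℝ) + 1) ^ (α - 2)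
      = ∑ i ∈ Finset.range k, (1 - α) * ((i : ℝ) + (M : ℝ) + 1) ^ (α - 2) := by
        rw [Finset.mul_sum]
    _ ≤ ∑ i ∈ Finset.range k, (((i + M : ℕ) : ℝ) ^ (α-1) - ((i + 1 + M : ℕ) : ℝ) ^ (α-1)) := by
        refine Finset.sum_le_sum fun i _ => ?_
        push_cast
        have hc : (1:ℝ) ≤ (i:ℝ) + M := by
          have h1 : (1:ℝ) ≤ (M:ℝ) := by exact_mod_cast hM
          have h2 : (0:ℝ) ≤ (i:ℝ) := Nat.cast_nonneg i
          linarith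
        have := stepB' hα1 hc
        calc (1 - α) * ((i : ℝ) + (M : ℝ) + 1) ^ (α - 2)
            = (1 - α) * (((i : ℝ) + (M:ℝ)) + 1) ^ (α - 2) := by ring_nf
          _ ≤ ((i:ℝ) + M) ^ (α-1) - (((i:ℝ) + M) + 1) ^ (α-1) := this
          _ = ((i:ℝ) + M) ^ (α-1) - ((i:ℝ) + 1 + M) ^ (α-1) := by ring_nf
    _ = ((0 + M : ℕ) : ℝ) ^ (α-1) - ((k + M : ℕ) : ℝ) ^ (α-1) :=
        Finset.sum_range_sub' (fun i => ((i + M : ℕ) : ℝ) ^ (α-1)) k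
    _ ≤ (M : ℝ) ^ (α-1) := by
        have : (0:ℝ) ≤ ((k + M : ℕ) : ℝ) ^ (α-1) := Real.rpow_nonneg (Nat.cast_nonneg _) _
        simp only [Nat.zero_add]
        linarith

private lemma fiber_eq (f : ℕ → ℝ) (x : ℝ) (hx : 2 ≤ x) (M : ℕ) (hM1 : 1 ≤ M) :
    ∑ n ∈ Finset.Ioc ⌊x / ((M:ℝ)+1)⌋₊ ⌊x⌋₊, f ⌊x / (n:ℝ)⌋₊ =
      ∑ m ∈ Finset.Ioc 0 M, ((⌊x/(m:ℝ)⌋₊ - ⌊x/((m:ℝ)+1)⌋₊ : ℕ) : ℝ) * f m := by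
  have hx0 : (0:ℝ) < x := by linarith
  set T := ⌊x / ((M:ℝ)+1)⌋₊ with hT
  set N := ⌊x⌋₊ with hN
  have hNx : (N:ℝ) ≤ x := Nat.floor_le hx0.le
  have hTle : (T:ℝ) ≤ x / ((M:ℝ)+1) := Nat.floor_le (by positivity)
  have hmaps : ∀ n ∈ Finset.Ioc T N, ⌊x / (n:ℝ)⌋₊ ∈ Finset.Ioc 0 M := by
    intro n hn
    rw [Finset.mem_Ioc] at hn ⊢
    have hn1 : 0 < n := by omega
    have hnR : (0:ℝ) < n := by exact_mod_cast hn1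
    have hnx : (n:ℝ) ≤ x := le_trans (by exact_mod_cast hn.2) hNx
    constructor
    · have : (1:ℝ) ≤ x / n := (one_le_div hnR).mpr hnx
      exact Nat.le_floor (by exact_mod_cast this)
    · have h1 : x / ((M:ℝ)+1) < n := by
        have ha : x / ((M:ℝ)+1) < (T:ℝ) + 1 := Nat.lt_floor_add_one _
        have hb : ((T:ℝ)) + 1 ≤ (n:ℝ) := by exact_mod_cast hn.1
        linarith
      have h2 : x / n < (M:ℝ) + 1 := by
        rw [div_lt_iff₀ hnR]
        rw [div_lt_iff₀ (by positivity : (0:ℝ) < (M:ℝ)+1)] at h1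
        linarith [h1]
      have := (Nat.floor_lt (by positivity : (0:ℝ) ≤ x / n)).mpr (by exact_mod_cast h2)
      omega
  have hfiber : ∀ m ∈ Finset.Ioc 0 M,
      (Finset.Ioc T N).filter (fun n : ℕ => ⌊x / (n:ℝ)⌋₊ = m)
        = Finset.Ioc (⌊x/((m:ℝ)+1)⌋₊) (⌊x/(m:ℝ)⌋₊) := by
    intro m hm
    rw [Finset.mem_Ioc] at hm
    have hm0 : (0:ℝ) < m := by exact_mod_cast hm.1
    have hmM : (m:ℝ) ≤ M := by exact_mod_cast hm.2
    ext n
    simp only [Finset.mem_filter, Finset.mem_Ioc]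
    constructor
    · rintro ⟨⟨hTn, hnN⟩, hq⟩
      have hn1 : 0 < n := by omega
      have hnR : (0:ℝ) < n := by exact_mod_cast hn1
      have hml : (m:ℝ) ≤ x / n := by rw [← hq]; exact Nat.floor_le (by positivity)
      have hmu : x / n < (m:ℝ) + 1 := by rw [← hq]; exact Nat.lt_floor_add_one _
      constructor
      · refine (Nat.floor_lt (by positivity)).mpr ?_
        rw [div_lt_iff₀ (by positivity : (0:ℝ) < (m:ℝ)+1)]
        rw [div_lt_iff₀ hnR] at hmu
        linarith
      · refine Nat.le_floor ?_
        rw [le_div_iff₀ hm0]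
        rw [le_div_iff₀ hnR] at hml
        linarith
    · rintro ⟨h1, h2⟩
      have hn1 : 0 < n := by omega
      have hnR : (0:ℝ) < n := by exact_mod_cast hn1
      have h2' : (n:ℝ) ≤ x / m := by
        rw [← Nat.le_floor_iff (by positivity)]; exact h2
      have h1' : x / ((m:ℝ)+1) < n := (Nat.floor_lt (by positivity)).mp h1
      have hm1 : (1:ℝ) ≤ (m:ℝ) := by exact_mod_cast hm.1
      have hxm : x / (m:ℝ) ≤ x := by
        rw [div_le_iff₀ hm0]; nlinarith
      have hdiv : x / ((M:ℝ)+1) ≤ x / ((m:ℝ)+1) := by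
        apply div_le_div_of_nonneg_left hx0.le (by positivity)
        linarith
      refine ⟨⟨?_, ?_⟩, ?_⟩
      · have : (T:ℝ) < n := lt_of_le_of_lt (hTle.trans hdiv) h1'
        exact_mod_cast this
      · exact Nat.le_floor (h2'.trans hxm)
      · rw [Nat.floor_eq_iff (by positivity)]
        constructor
        · rw [le_div_iff₀ hnR]
          rw [le_div_iff₀ hm0] at h2'
          linarith
        · rw [div_lt_iff₀ hnR]
          rw [div_lt_iff₀ (by positivity : (0:ℝ) < (m:ℝ)+1)] at h1'
          linarith
  rw [← Finset.sum_fiberwise_of_maps_to' hmaps f]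
  refine Finset.sum_congr rfl fun m hm => ?_
  rw [hfiber m hm, Finset.sum_const, Nat.card_Ioc, nsmul_eq_mul]

set_option maxHeartbeats 1000000 in
theorem stmt_1 (f : ℕ → ℝ) (C α : ℝ) (hC : 0 < C) (hα0 : 0 ≤ α) (hα1 : α < 1)
    (hf : ∀ n : ℕ, 1 ≤ n → |f n| ≤ C * (n : ℝ) ^ α) :
    ∃ K > 0, ∀ x : ℝ, 2 ≤ x →
      |(∑ n ∈ Finset.Icc 1 ⌊x⌋₊, f ⌊x / (n : ℝ)⌋₊) -
        (∑' n : ℕ, f (n + 1) / (((n : ℝ) + 1) * ((n : ℝ) + 2))) * x|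
      ≤ K * x ^ ((1 + α) / 2) := by
  have h1α : (0:ℝ) < 1 - α := by linarith
  refine ⟨4 * C / (1 - α), by positivity, fun x hx => ?_⟩
  have hx0 : (0:ℝ) < x := by linarith
  set h : ℕ → ℝ := fun n => f (n + 1) / (((n : ℝ) + 1) * ((n : ℝ) + 2)) with hh
  -- bound on terms of the series
  have hhb : ∀ n : ℕ, |h n| ≤ C * ((n:ℝ)+1) ^ (α - 2) := by
    intro n
    have hb0 : (0:ℝ) < (n:ℝ) + 1 := by positivity
    have hb2 : (0:ℝ) < ((n:ℝ)+1) * ((n:ℝ) + 2) := by positivity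
    rw [hh]
    simp only []
    rw [abs_div, abs_of_pos hb2, div_le_iff₀ hb2]
    have h3 : |f (n+1)| ≤ C * ((n:ℝ)+1) ^ α := by
      have := hf (n+1) (by omega)
      convert this using 3
      push_cast; ring
    refine h3.trans ?_
    have key : ((n:ℝ)+1) ^ α = ((n:ℝ)+1) ^ (α - 2) * (((n:ℝ)+1) * ((n:ℝ)+1)) := by
      have h2 : ((n:ℝ)+1) * ((n:ℝ)+1) = ((n:ℝ)+1) ^ ((2:ℕ):ℝ) := by
        rw [Real.rpow_natCast]; ring
      rw [h2, ← Real.rpow_add hb0]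
      norm_num
    calc C * ((n:ℝ)+1) ^ α = C * ((n:ℝ)+1) ^ (α - 2) * (((n:ℝ)+1) * ((n:ℝ)+1)) := by
          rw [key]; ring
      _ ≤ C * ((n:ℝ)+1) ^ (α - 2) * (((n:ℝ)+1) * ((n:ℝ) + 2)) := by
          have h4 : (0:ℝ) ≤ C * ((n:ℝ)+1) ^ (α - 2) := by positivity
          nlinarith [hb0]
  have hsum : Summable h := by
    have h1 : Summable (fun n : ℕ => ((n:ℝ)) ^ (α - 2)) :=
      Real.summable_nat_rpow.mpr (by linarith)
    have h2 : Summable (fun n : ℕ => (((n+1 : ℕ)):ℝ) ^ (α - 2)) :=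
      (summable_nat_add_iff 1).mpr h1
    have h3 : Summable (fun n : ℕ => C * ((n:ℝ)+1) ^ (α - 2)) := by
      refine (h2.mul_left C).congr fun n => ?_
      push_cast; ring_nf
    exact Summable.of_norm_bounded h3 fun n => by
      rw [Real.norm_eq_abs]; exact hhb n
  -- set up the split point
  set s : ℝ := x ^ ((1:ℝ)/2) with hs
  have hs0 : 0 < s := Real.rpow_pos_of_pos hx0 _
  have hs1 : (1:ℝ) ≤ s := by
    have : (1:ℝ)^((1:ℝ)/2) ≤ s := Real.rpow_le_rpow (by norm_num) (by linarith) (by norm_num)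
    simpa using this
  have hss : s * s = x := by
    rw [hs, ← Real.rpow_add hx0]; norm_num
  have hsx : s ≤ x := by nlinarith
  set M : ℕ := ⌊s⌋₊ with hM
  have hM1 : 1 ≤ M := Nat.le_floor (by exact_mod_cast hs1)
  have hMs : (M:ℝ) ≤ s := Nat.floor_le hs0.le
  have hMR1 : (1:ℝ) ≤ (M:ℝ) := by exact_mod_cast hM1
  have hsM : s < (M:ℝ) + 1 := Nat.lt_floor_add_one s
  have hs2M : s / 2 ≤ (M:ℝ) := by linarith
  set N : ℕ := ⌊x⌋₊ with hN
  have hNx : (N:ℝ) ≤ x := Nat.floor_le hx0.le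
  set T : ℕ := ⌊x / ((M:ℝ)+1)⌋₊ with hT
  have hTle : (T:ℝ) ≤ x / ((M:ℝ)+1) := Nat.floor_le (by positivity)
  have hTs : (T:ℝ) ≤ s := by
    have h1 : x / ((M:ℝ)+1) ≤ x / s := by
      apply div_le_div_of_nonneg_left hx0.le hs0
      linarith
    have h2 : x / s = s := by
      rw [← hss]; field_simp
    linarith
  have hTN : T ≤ N := by
    apply Nat.floor_le_floor
    rw [div_le_iff₀ (by positivity : (0:ℝ) < (M:ℝ)+1)]
    nlinarith
  -- main exponent facts
  have hpow : ∀ β γ : ℝ, x ^ β * s ^ γ = x ^ (β + γ/2*1) := by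
    intro β γ
    rw [hs, ← Real.rpow_mul hx0.le, ← Real.rpow_add hx0]
    ring_nf
  set X : ℝ := x ^ ((1+α)/2) with hX
  have hX0 : (0:ℝ) ≤ X := (Real.rpow_pos_of_pos hx0 _).le
  have e1 : x ^ α * s ^ (1-α) = X := by
    rw [hpow, hX]; congr 1; ring
  have e2 : s ^ (1+α) = X := by
    have := hpow 0 (1+α)
    rw [Real.rpow_zero, one_mul] at this
    rw [this, hX]; congr 1; ring
  have e3 : x * s ^ (α-1) = X := by
    have := hpow 1 (α-1)
    rw [Real.rpow_one] at this
    rw [this, hX]; congr 1; ring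
  -- split of the finite sum
  have hIcc : Finset.Icc 1 N = Finset.Ioc 0 N := by rw [← Finset.Icc_add_one_left_eq_Ioc, Nat.zero_add]
  have hsplit1 : (∑ n ∈ Finset.Ioc 0 T, f ⌊x / (n:ℝ)⌋₊) + ∑ n ∈ Finset.Ioc T N, f ⌊x / (n:ℝ)⌋₊
      = ∑ n ∈ Finset.Ioc 0 N, f ⌊x / (n:ℝ)⌋₊ :=
    Finset.sum_Ioc_consecutive _ (Nat.zero_le T) hTN
  have hB := fiber_eq f x hx M hM1
  rw [← hT, ← hN] at hB
  -- split of the series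
  have htsum := Summable.sum_add_tsum_nat_add M hsum
  have hrange : ∑ i ∈ Finset.range M, h i = ∑ m ∈ Finset.Ioc 0 M, f m / ((m:ℝ)*((m:ℝ)+1)) := by
    rw [show Finset.Ioc 0 M = Finset.Ico 1 (M+1) by rw [Finset.Ico_add_one_right_eq_Icc, ← Finset.Icc_add_one_left_eq_Ioc, Nat.zero_add]]
    rw [Finset.sum_Ico_eq_sum_range]
    simp only [Nat.add_sub_cancel]
    refine Finset.sum_congr rfl fun i _ => ?_
    simp only [hh]
    rw [Nat.add_comm 1 i]
    push_cast
    ring_nf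
  -- error bound 1
  have hE1 : |∑ n ∈ Finset.Ioc 0 T, f ⌊x / (n:ℝ)⌋₊| ≤ C / (1-α) * X := by
    have hterm : ∀ n ∈ Finset.Ioc 0 T, |f ⌊x / (n:ℝ)⌋₊| ≤ C * x ^ α * ((n:ℝ))^(-α) := by
      intro n hn
      rw [Finset.mem_Ioc] at hn
      have hnR : (0:ℝ) < n := by exact_mod_cast hn.1
      have hnx : (n:ℝ) ≤ x := by
        have : (n:ℝ) ≤ T := by exact_mod_cast hn.2
        linarith [hTs, hsx]
      have hq1 : 1 ≤ ⌊x / (n:ℝ)⌋₊ := Nat.le_floor (by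
        exact_mod_cast (one_le_div hnR).mpr hnx)
      have h5 : |f ⌊x / (n:ℝ)⌋₊| ≤ C * ((⌊x / (n:ℝ)⌋₊ : ℕ):ℝ) ^ α := hf _ hq1
      refine h5.trans ?_
      have h6 : ((⌊x / (n:ℝ)⌋₊ : ℕ):ℝ) ^ α ≤ (x / n) ^ α :=
        Real.rpow_le_rpow (by positivity) (Nat.floor_le (by positivity)) hα0
      have h7 : (x / (n:ℝ)) ^ α = x ^ α * ((n:ℝ))^(-α) := by
        rw [Real.div_rpow hx0.le hnR.le, Real.rpow_neg hnR.le, div_eq_mul_inv]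
      calc C * ((⌊x / (n:ℝ)⌋₊ : ℕ):ℝ) ^ α ≤ C * (x / n) ^ α :=
            mul_le_mul_of_nonneg_left h6 hC.le
        _ = C * x ^ α * ((n:ℝ))^(-α) := by rw [h7]; ring
    have hreindex : ∑ n ∈ Finset.Ioc 0 T, ((n:ℝ))^(-α)
        = ∑ i ∈ Finset.range T, ((i:ℝ)+1)^(-α) := by
      rw [show Finset.Ioc 0 T = Finset.Ico 1 (T+1) by rw [Finset.Ico_add_one_right_eq_Icc, ← Finset.Icc_add_one_left_eq_Ioc, Nat.zero_add]]
      rw [Finset.sum_Ico_eq_sum_range]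
      simp only [Nat.add_sub_cancel]
      exact Finset.sum_congr rfl fun i _ => by push_cast; ring_nf
    calc |∑ n ∈ Finset.Ioc 0 T, f ⌊x / (n:ℝ)⌋₊|
        ≤ ∑ n ∈ Finset.Ioc 0 T, |f ⌊x / (n:ℝ)⌋₊| := Finset.abs_sum_le_sum_abs _ _
      _ ≤ ∑ n ∈ Finset.Ioc 0 T, C * x ^ α * ((n:ℝ))^(-α) := Finset.sum_le_sum hterm
      _ = C * x ^ α * ∑ n ∈ Finset.Ioc 0 T, ((n:ℝ))^(-α) := by rw [Finset.mul_sum]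
      _ ≤ C * x ^ α * ((T:ℝ) ^ (1-α) / (1-α)) := by
          refine mul_le_mul_of_nonneg_left ?_ (by positivity)
          rw [hreindex]
          exact sumA' hα0 hα1 T
      _ ≤ C * x ^ α * (s ^ (1-α) / (1-α)) := by
          have h8 : (T:ℝ)^(1-α) ≤ s^(1-α) :=
            Real.rpow_le_rpow (Nat.cast_nonneg T) hTs (by linarith)
          gcongr
      _ = C / (1-α) * X := by rw [← e1]; ring
  -- error bound 2
  have hE2 : |∑ m ∈ Finset.Ioc 0 M, (((⌊x/(m:ℝ)⌋₊ - ⌊x/((m:ℝ)+1)⌋₊ : ℕ):ℝ) * f m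
      - f m / ((m:ℝ)*((m:ℝ)+1)) * x)| ≤ C * X := by
    have hterm : ∀ m ∈ Finset.Ioc 0 M, |((⌊x/(m:ℝ)⌋₊ - ⌊x/((m:ℝ)+1)⌋₊ : ℕ):ℝ) * f m
        - f m / ((m:ℝ)*((m:ℝ)+1)) * x| ≤ C * s ^ α := by
      intro m hm
      rw [Finset.mem_Ioc] at hm
      have hm0 : (0:ℝ) < m := by exact_mod_cast hm.1
      have hmM : (m:ℝ) ≤ M := by exact_mod_cast hm.2
      have hdivm : x / ((m:ℝ)+1) ≤ x / (m:ℝ) := by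
        apply div_le_div_of_nonneg_left hx0.le hm0
        linarith
      have hba : ⌊x/((m:ℝ)+1)⌋₊ ≤ ⌊x/(m:ℝ)⌋₊ := Nat.floor_le_floor hdivm
      have hcast : ((⌊x/(m:ℝ)⌋₊ - ⌊x/((m:ℝ)+1)⌋₊ : ℕ):ℝ)
          = ((⌊x/(m:ℝ)⌋₊ : ℕ):ℝ) - ((⌊x/((m:ℝ)+1)⌋₊ : ℕ):ℝ) := by
        exact_mod_cast Nat.cast_sub hba
      have hu1 : ((⌊x/(m:ℝ)⌋₊ : ℕ):ℝ) ≤ x / m := Nat.floor_le (by positivity)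
      have hu2 : x / m < ((⌊x/(m:ℝ)⌋₊ : ℕ):ℝ) + 1 := Nat.lt_floor_add_one _
      have hv1 : ((⌊x/((m:ℝ)+1)⌋₊ : ℕ):ℝ) ≤ x / ((m:ℝ)+1) := Nat.floor_le (by positivity)
      have hv2 : x / ((m:ℝ)+1) < ((⌊x/((m:ℝ)+1)⌋₊ : ℕ):ℝ) + 1 := Nat.lt_floor_add_one _
      have huv : x / (m:ℝ) - x / ((m:ℝ)+1) = x / ((m:ℝ)*((m:ℝ)+1)) := by
        field_simp
        ring
      have hone : |((⌊x/(m:ℝ)⌋₊ - ⌊x/((m:ℝ)+1)⌋₊ : ℕ):ℝ) - x / ((m:ℝ)*((m:ℝ)+1))| ≤ 1 := by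
        rw [hcast, ← huv, abs_le]
        constructor <;> linarith
      have hfm : |f m| ≤ C * s ^ α := by
        refine (hf m hm.1).trans ?_
        have : ((m:ℕ):ℝ) ^ α ≤ s ^ α :=
          Real.rpow_le_rpow (Nat.cast_nonneg m) (by linarith) hα0
        exact mul_le_mul_of_nonneg_left this hC.le
      have heq : ((⌊x/(m:ℝ)⌋₊ - ⌊x/((m:ℝ)+1)⌋₊ : ℕ):ℝ) * f m - f m / ((m:ℝ)*((m:ℝ)+1)) * x
          = f m * (((⌊x/(m:ℝ)⌋₊ - ⌊x/((m:ℝ)+1)⌋₊ : ℕ):ℝ) - x / ((m:ℝ)*((m:ℝ)+1))) := by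
        field_simp
      rw [heq, abs_mul]
      calc |f m| * |((⌊x/(m:ℝ)⌋₊ - ⌊x/((m:ℝ)+1)⌋₊ : ℕ):ℝ) - x / ((m:ℝ)*((m:ℝ)+1))|
          ≤ (C * s ^ α) * 1 := by
            apply mul_le_mul hfm hone (abs_nonneg _) (by positivity)
        _ = C * s ^ α := by ring
    calc |∑ m ∈ Finset.Ioc 0 M, (((⌊x/(m:ℝ)⌋₊ - ⌊x/((m:ℝ)+1)⌋₊ : ℕ):ℝ) * f m
          - f m / ((m:ℝ)*((m:ℝ)+1)) * x)|
        ≤ ∑ m ∈ Finset.Ioc 0 M, |((⌊x/(m:ℝ)⌋₊ - ⌊x/((m:ℝ)+1)⌋₊ : ℕ):ℝ) * f m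
          - f m / ((m:ℝ)*((m:ℝ)+1)) * x| := Finset.abs_sum_le_sum_abs _ _
      _ ≤ ∑ m ∈ Finset.Ioc 0 M, C * s ^ α := Finset.sum_le_sum hterm
      _ = (M:ℝ) * (C * s ^ α) := by
          rw [Finset.sum_const, Nat.card_Ioc, nsmul_eq_mul]
          norm_num
      _ ≤ s * (C * s ^ α) := by
          have : (0:ℝ) ≤ C * s ^ α := by positivity
          nlinarith
      _ = C * X := by
          rw [← e2, show (1:ℝ)+α = 1+α from rfl]
          rw [Real.rpow_add hs0, Real.rpow_one]
          ring
  -- error bound 3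
  have hRsum : Summable (fun n => h (n+M)) := (summable_nat_add_iff M).mpr hsum
  have hE3 : |∑' n : ℕ, h (n+M)| ≤ 2*C/(1-α) * s^(α-1) := by
    have habs : |∑' n : ℕ, h (n+M)| ≤ ∑' n : ℕ, |h (n+M)| := by
      have := norm_tsum_le_tsum_norm (f := fun n : ℕ => h (n+M)) (by
        refine hRsum.abs.congr fun n => ?_
        rw [Real.norm_eq_abs])
      simpa [Real.norm_eq_abs] using this
    have hpartial : ∀ k : ℕ, ∑ i ∈ Finset.range k, |h (i+M)| ≤ C * ((M:ℝ)^(α-1)/(1-α)) := by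
      intro k
      calc ∑ i ∈ Finset.range k, |h (i+M)|
          ≤ ∑ i ∈ Finset.range k, C * ((i:ℝ)+(M:ℝ)+1)^(α-2) := by
            refine Finset.sum_le_sum fun i _ => ?_
            have := hhb (i+M)
            refine this.trans ?_
            apply le_of_eq
            congr 1
            push_cast
            ring
        _ = C * ∑ i ∈ Finset.range k, ((i:ℝ)+(M:ℝ)+1)^(α-2) := by rw [Finset.mul_sum]
        _ ≤ C * ((M:ℝ)^(α-1)/(1-α)) :=
            mul_le_mul_of_nonneg_left (sumB' hα0 hα1 hM1 k) hC.le
    have htail : ∑' n : ℕ, |h (n+M)| ≤ C * ((M:ℝ)^(α-1)/(1-α)) :=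
      Real.tsum_le_of_sum_range_le (fun n => abs_nonneg _) hpartial
    have hM2 : ((M:ℝ))^(α-1) ≤ 2 * s^(α-1) := by
      have hstep : ((M:ℝ))^(α-1) ≤ (s/2)^(α-1) :=
        Real.rpow_le_rpow_of_nonpos (by positivity) hs2M (by linarith)
      refine hstep.trans ?_
      rw [Real.div_rpow hs0.le (by norm_num)]
      have hhalf : (1:ℝ)/2 ≤ (2:ℝ)^(α-1) := by
        have h10 : (2:ℝ)^(-1:ℝ) ≤ (2:ℝ)^(α-1) :=
          Real.rpow_le_rpow_of_exponent_le (by norm_num) (by linarith)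
        have h11 : (2:ℝ)^(-1:ℝ) = 1/2 := by
          rw [Real.rpow_neg (by norm_num), Real.rpow_one]
          norm_num
        rwa [h11] at h10
      calc s^(α-1) / (2:ℝ)^(α-1) ≤ s^(α-1) / (1/2) :=
            div_le_div_of_nonneg_left (Real.rpow_nonneg hs0.le _) (by norm_num) hhalf
        _ = 2 * s^(α-1) := by ring
    calc |∑' n : ℕ, h (n+M)| ≤ C * ((M:ℝ)^(α-1)/(1-α)) := habs.trans htail
      _ ≤ C * ((2 * s^(α-1))/(1-α)) := by gcongr
      _ = 2*C/(1-α) * s^(α-1) := by ring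
  -- assemble
  have hCf : (∑' n, h n) = (∑ m ∈ Finset.Ioc 0 M, f m / ((m:ℝ)*((m:ℝ)+1)))
      + ∑' n : ℕ, h (n+M) := by rw [← htsum, hrange]
  have key : (∑ n ∈ Finset.Icc 1 N, f ⌊x / (n:ℝ)⌋₊) - (∑' n, h n) * x
      = (∑ n ∈ Finset.Ioc 0 T, f ⌊x / (n:ℝ)⌋₊)
        + (∑ m ∈ Finset.Ioc 0 M, (((⌊x/(m:ℝ)⌋₊ - ⌊x/((m:ℝ)+1)⌋₊ : ℕ):ℝ) * f m
          - f m / ((m:ℝ)*((m:ℝ)+1)) * x))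
        - (∑' n : ℕ, h (n+M)) * x := by
    rw [hIcc, ← hsplit1, hB, hCf, Finset.sum_sub_distrib, ← Finset.sum_mul]
    ring
  rw [key]
  have hfinal : |(∑ n ∈ Finset.Ioc 0 T, f ⌊x / (n:ℝ)⌋₊)
        + (∑ m ∈ Finset.Ioc 0 M, (((⌊x/(m:ℝ)⌋₊ - ⌊x/((m:ℝ)+1)⌋₊ : ℕ):ℝ) * f m
          - f m / ((m:ℝ)*((m:ℝ)+1)) * x))
        - (∑' n : ℕ, h (n+M)) * x|
      ≤ C/(1-α)*X + C*X + (2*C/(1-α) * s^(α-1)) * x := by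
    have h12 := abs_add_le (∑ n ∈ Finset.Ioc 0 T, f ⌊x / (n:ℝ)⌋₊)
      (∑ m ∈ Finset.Ioc 0 M, (((⌊x/(m:ℝ)⌋₊ - ⌊x/((m:ℝ)+1)⌋₊ : ℕ):ℝ) * f m
        - f m / ((m:ℝ)*((m:ℝ)+1)) * x))
    have h13 := abs_sub ((∑ n ∈ Finset.Ioc 0 T, f ⌊x / (n:ℝ)⌋₊)
        + (∑ m ∈ Finset.Ioc 0 M, (((⌊x/(m:ℝ)⌋₊ - ⌊x/((m:ℝ)+1)⌋₊ : ℕ):ℝ) * f m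
          - f m / ((m:ℝ)*((m:ℝ)+1)) * x)))
      ((∑' n : ℕ, h (n+M)) * x)
    have h14 : |(∑' n : ℕ, h (n+M)) * x| = |∑' n : ℕ, h (n+M)| * x := by
      rw [abs_mul, abs_of_pos hx0]
    have h15 : |∑' n : ℕ, h (n+M)| * x ≤ (2*C/(1-α) * s^(α-1)) * x :=
      mul_le_mul_of_nonneg_right hE3 hx0.le
    linarith [hE1, hE2]
  refine hfinal.trans ?_
  have h16 : (2*C/(1-α) * s^(α-1)) * x = 2*C/(1-α) * X := by
    rw [← e3]; ring
  have h17 : C ≤ C/(1-α) := by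
    rw [le_div_iff₀ h1α]
    nlinarith
  have h18 : C*X ≤ C/(1-α)*X := mul_le_mul_of_nonneg_right h17 hX0
  rw [h16]
  have e4 : 2 * C / (1 - α) * X = 2 * (C / (1 - α) * X) := by ring
  have e5 : 4 * C / (1 - α) * X = 4 * (C / (1 - α) * X) := by ring
  linarith [h18]
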